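/- arXiv:2412.20119 — 2 statements merged into one kernel-verified Lean document; each statement's English description precedes it below -/
import Mathlib

section
/- Let E be a real Banach space, let p > 1 and a > 0 be real numbers, let L ∈ E, and let h : ℝ → E be differentiable on [a, ∞). If h(r) → 0 as r → ∞ and r^p • h'(r) → L as r → ∞, then r^{p−1} • h(r) → (1/(1−p)) • L as r → ∞. -/
open Filter Topology

/-- **L'Hôpital-type limit lemma** (Lemma 3.1 of the paper).
If `h : ℝ → E` is differentiable on `[a, ∞)`, `h(r) → 0` and `r^p • h'(r) → L`
as `r → ∞` (with `p > 1`), then `r^(p-1) • h(r) → (1/(1-p)) • L`. -/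
theorem stmt0 {E : Type*} [NormedAddCommGroup E] [NormedSpace ℝ E] [CompleteSpace E]
    (p a : ℝ) (hp : 1 < p) (ha : 0 < a) (L : E) (h h' : ℝ → E)
    (hderiv : ∀ r ∈ Set.Ici a, HasDerivAt h (h' r) r)
    (hlim : Tendsto h atTop (𝓝 (0 : E)))
    (hlim' : Tendsto (fun r : ℝ => r ^ p • h' r) atTop (𝓝 L)) :
    Tendsto (fun r : ℝ => r ^ (p - 1) • h r) atTop (𝓝 ((1 / (1 - p)) • L)) := by
  have hp1 : (0 : ℝ) < p - 1 := by linarith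
  have h1p : (1 : ℝ) - p ≠ 0 := by linarith
  -- the auxiliary function g
  set g : ℝ → E := fun s => h s - ((1 / (1 - p)) * s ^ (1 - p)) • L with hg_def
  -- g tends to 0 at infinity
  have hg_lim : Tendsto g atTop (𝓝 (0 : E)) := by
    have h2 : Tendsto (fun s : ℝ => s ^ (1 - p)) atTop (𝓝 (0 : ℝ)) := by
      have := tendsto_rpow_neg_atTop hp1
      simpa [neg_sub] using this
    have h3 : Tendsto (fun s : ℝ => ((1 / (1 - p)) * s ^ (1 - p)) • L) atTop
        (𝓝 (((1 / (1 - p)) * 0) • L)) :=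
      ((tendsto_const_nhds.mul h2).smul_const L)
    simpa [hg_def] using hlim.sub h3
  rw [Metric.tendsto_nhds]
  intro ε hε
  set δ : ℝ := ε * (p - 1) / 2 with hδ_def
  have hδ : 0 < δ := by positivity
  have hev : ∀ᶠ s : ℝ in atTop, ‖s ^ p • h' s - L‖ ≤ δ := by
    filter_upwards [Metric.tendsto_nhds.mp hlim' δ hδ] with s hs
    rw [dist_eq_norm] at hs; exact hs.le
  obtain ⟨R₀, hR₀⟩ := eventually_atTop.mp hev
  set R : ℝ := max R₀ (max a 1) with hR_def
  have hRa : a ≤ R := le_max_of_le_right (le_max_left _ _)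
  have hR1 : (1 : ℝ) ≤ R := le_max_of_le_right (le_max_right _ _)
  have hRpos : (0 : ℝ) < R := lt_of_lt_of_le one_pos hR1
  -- derivative of g
  have hg' : ∀ s : ℝ, R ≤ s → HasDerivAt g (h' s - s ^ (-p) • L) s := by
    intro s hs
    have hs0 : (0 : ℝ) < s := lt_of_lt_of_le hRpos hs
    have hd1 : HasDerivAt (fun t : ℝ => ((1 / (1 - p)) * t ^ (1 - p)) • L) (s ^ (-p) • L) s := by
      have hd := ((Real.hasDerivAt_rpow_const (x := s) (p := 1 - p)
        (Or.inl hs0.ne')).const_mul (1 / (1 - p))).smul_const L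
      convert hd using 2
      rw [show (1 : ℝ) - p - 1 = -p by ring]
      field_simp
    exact (hderiv s (le_trans hRa hs)).sub hd1
  -- bound on the derivative of g
  have hbound : ∀ s : ℝ, R ≤ s → ‖h' s - s ^ (-p) • L‖ ≤ δ * s ^ (-p) := by
    intro s hs
    have hs0 : (0 : ℝ) < s := lt_of_lt_of_le hRpos hs
    have hrw : h' s - s ^ (-p) • L = s ^ (-p) • (s ^ p • h' s - L) := by
      rw [smul_sub, smul_smul, ← Real.rpow_add hs0]
      norm_num
    rw [hrw, norm_smul, Real.norm_eq_abs, abs_of_pos (Real.rpow_pos_of_pos hs0 _), mul_comm]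
    exact mul_le_mul_of_nonneg_right (hR₀ s (le_trans (le_max_left _ _) hs))
      (Real.rpow_pos_of_pos hs0 _).le
  -- key estimate
  have key : ∀ r : ℝ, R ≤ r → ‖g r‖ ≤ δ / (p - 1) * r ^ (1 - p) := by
    intro r hr
    have hr0 : (0 : ℝ) < r := lt_of_lt_of_le hRpos hr
    -- for every b ≥ r, fence ‖g b - g r‖
    have hfence : ∀ b : ℝ, r ≤ b →
        ‖g b - g r‖ ≤ δ / (p - 1) * r ^ (1 - p) := by
      intro b hb
      set B : ℝ → ℝ := fun t => δ / (p - 1) * (r ^ (1 - p) - t ^ (1 - p)) with hB_def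
      have hB' : ∀ t : ℝ, R ≤ t → HasDerivAt B (δ * t ^ (-p)) t := by
        intro t ht
        have ht0 : (0 : ℝ) < t := lt_of_lt_of_le hRpos ht
        have hd := ((Real.hasDerivAt_rpow_const (x := t) (p := 1 - p)
          (Or.inl ht0.ne')).const_sub (r ^ (1 - p))).const_mul (δ / (p - 1))
        refine hd.congr_deriv ?_
        rw [show (1 : ℝ) - p - 1 = -p by ring]
        field_simp
        ring
      have main := image_norm_le_of_norm_deriv_right_le_deriv_boundary'
        (f := fun t => g t - g r) (f' := fun t => h' t - t ^ (-p) • L)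
        (a := r) (b := b)
        (fun t ht => (((hg' t (le_trans hr ht.1)).sub_const (g r)).continuousAt).continuousWithinAt)
        (fun t ht => ((hg' t (le_trans hr ht.1)).sub_const (g r)).hasDerivWithinAt)
        (B := B) (B' := fun t => δ * t ^ (-p))
        (by simp [hB_def])
        (fun t ht => (hB' t (le_trans hr ht.1)).continuousAt.continuousWithinAt)
        (fun t ht => (hB' t (le_trans hr ht.1)).hasDerivWithinAt)
        (fun t ht => hbound t (le_trans hr ht.1))
      have hmem : b ∈ Set.Icc r b := ⟨hb, le_refl b⟩
      have h1 := main hmem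
      have hb0 : (0 : ℝ) < b := lt_of_lt_of_le hr0 hb
      have h2 : B b ≤ δ / (p - 1) * r ^ (1 - p) := by
        have : (0 : ℝ) ≤ b ^ (1 - p) := (Real.rpow_pos_of_pos hb0 _).le
        have hnn : (0 : ℝ) ≤ δ / (p - 1) := by positivity
        calc B b = δ / (p - 1) * (r ^ (1 - p) - b ^ (1 - p)) := rfl
          _ ≤ δ / (p - 1) * r ^ (1 - p) := by nlinarith
      exact h1.trans h2
    -- take the limit b → ∞
    have hlim2 : Tendsto (fun b : ℝ => ‖g b - g r‖) atTop (𝓝 ‖(0 : E) - g r‖) :=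
      ((hg_lim.sub tendsto_const_nhds).norm)
    have := le_of_tendsto hlim2 (eventually_atTop.mpr ⟨r, fun b hb => hfence b hb⟩)
    simpa using this
  -- finish
  have hfin : ∀ r : ℝ, R ≤ r → dist (r ^ (p - 1) • h r) ((1 / (1 - p)) • L) < ε := by
    intro r hr
    have hr0 : (0 : ℝ) < r := lt_of_lt_of_le hRpos hr
    have hrr : r ^ (p - 1) * r ^ (1 - p) = 1 := by
      rw [← Real.rpow_add hr0]; norm_num
    have hrw : r ^ (p - 1) • h r - (1 / (1 - p)) • L = r ^ (p - 1) • g r := by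
      rw [hg_def]
      simp only [smul_sub, smul_smul]
      rw [show r ^ (p - 1) * (1 / (1 - p) * r ^ (1 - p)) = 1 / (1 - p) by
        rw [mul_comm (1 / (1 - p)), ← mul_assoc, hrr, one_mul]]
    rw [dist_eq_norm, hrw, norm_smul, Real.norm_eq_abs,
      abs_of_pos (Real.rpow_pos_of_pos hr0 _)]
    calc r ^ (p - 1) * ‖g r‖ ≤ r ^ (p - 1) * (δ / (p - 1) * r ^ (1 - p)) :=
          mul_le_mul_of_nonneg_left (key r hr) (Real.rpow_pos_of_pos hr0 _).le
      _ = δ / (p - 1) * (r ^ (p - 1) * r ^ (1 - p)) := by ring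
      _ = δ / (p - 1) := by rw [hrr, mul_one]
      _ = ε / 2 := by rw [hδ_def]; field_simp
      _ < ε := by linarith
  exact eventually_atTop.mpr ⟨R, hfin⟩
end

section
/- Let k be a natural number, let γ ∈ (0,1) and C ≥ 0 be real numbers, and let f : (0,1] → ℝ be (k+1)-times differentiable on (0,1] with |f^{(j)}(ρ)| ≤ C for all ρ ∈ (0,1] and all 0 ≤ j ≤ k, and |f^{(k+1)}(ρ)| ≤ C · ρ^{γ−1} for all ρ ∈ (0,1]. Then f extends to a function f̃ : [0,1] → ℝ that is k times continuously differentiable on [0,1] (with one-sided derivatives at 0), and whose k-th derivative satisfies |f̃^{(k)}(ρ₁) − f̃^{(k)}(ρ₂)| ≤ (C/γ) · |ρ₁ − ρ₂|^γ for all ρ₁, ρ₂ ∈ [0,1]; that is, f̃ belongs to the Hölder space C^{k,γ}([0,1]). -/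
open Filter Topology Set

private lemma rpow_sub_le_aux (γ : ℝ) (hγ0 : 0 < γ) (hγ1 : γ ≤ 1) {a b : ℝ}
    (ha : 0 ≤ a) (hab : a ≤ b) : b ^ γ - a ^ γ ≤ (b - a) ^ γ := by
  have hb : (0:ℝ) ≤ b - a := by linarith
  have h := NNReal.rpow_add_le_add_rpow ((b - a).toNNReal) (a.toNNReal) hγ0.le hγ1
  have h' : ((((b-a).toNNReal + a.toNNReal) ^ γ : NNReal) : ℝ) ≤
      (((b-a).toNNReal ^ γ : NNReal) : ℝ) + ((a.toNNReal ^ γ : NNReal) : ℝ) := by exact_mod_cast h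
  rw [NNReal.coe_rpow, NNReal.coe_rpow, NNReal.coe_rpow, NNReal.coe_add,
    Real.coe_toNNReal _ hb, Real.coe_toNNReal _ ha] at h'
  have hba : b - a + a = b := by ring
  rw [hba] at h'
  linarith

/-- **`C^{k,γ}` regularity up to the boundary** (analytic core of Theorem 6.2 of the
paper). If `f : (0,1] → ℝ` is `(k+1)`-times differentiable on `(0,1]` with derivatives
of order `≤ k` bounded by `C` and `(k+1)`-st derivative bounded by `C·ρ^(γ-1)`, then
`f` extends to a `C^k` function on `[0,1]` whose `k`-th derivative is `γ`-Hölder with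
constant `C/γ`, i.e. the extension belongs to `C^{k,γ}([0,1])`. -/
theorem stmt6 (k : ℕ) (γ C : ℝ) (hγ0 : 0 < γ) (hγ1 : γ < 1) (hC : 0 ≤ C)
    (f : ℝ → ℝ)
    (hdiff : ∀ j ≤ k, DifferentiableOn ℝ
      (iteratedDerivWithin j f (Set.Ioc (0 : ℝ) 1)) (Set.Ioc (0 : ℝ) 1))
    (hbound : ∀ j ≤ k, ∀ ρ ∈ Set.Ioc (0 : ℝ) 1,
      |iteratedDerivWithin j f (Set.Ioc (0 : ℝ) 1) ρ| ≤ C)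
    (hbound' : ∀ ρ ∈ Set.Ioc (0 : ℝ) 1,
      |iteratedDerivWithin (k + 1) f (Set.Ioc (0 : ℝ) 1) ρ| ≤ C * ρ ^ (γ - 1)) :
    ∃ ftilde : ℝ → ℝ,
      (∀ ρ ∈ Set.Ioc (0 : ℝ) 1, ftilde ρ = f ρ) ∧
      ContDiffOn ℝ k ftilde (Set.Icc (0 : ℝ) 1) ∧
      ∀ ρ₁ ∈ Set.Icc (0 : ℝ) 1, ∀ ρ₂ ∈ Set.Icc (0 : ℝ) 1,
        |iteratedDerivWithin k ftilde (Set.Icc (0 : ℝ) 1) ρ₁ -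
          iteratedDerivWithin k ftilde (Set.Icc (0 : ℝ) 1) ρ₂| ≤
            (C / γ) * |ρ₁ - ρ₂| ^ γ := by
  set s : Set ℝ := Set.Ioc 0 1 with hs_def
  set t : Set ℝ := Set.Icc 0 1 with ht_def
  set g : ℕ → ℝ → ℝ := fun j => iteratedDerivWithin j f s with hg_def
  have hsuniq : UniqueDiffOn ℝ s := uniqueDiffOn_Ioc 0 1
  have htuniq : UniqueDiffOn ℝ t := uniqueDiffOn_Icc zero_lt_one
  have hCγ : 0 ≤ C / γ := div_nonneg hC hγ0.le
  -- derivative relation within s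
  have hder : ∀ j ≤ k, ∀ x ∈ s, HasDerivWithinAt (g j) (g (j+1) x) s x := by
    intro j hj x hx
    have h1 := (hdiff j hj x hx).hasDerivWithinAt
    have h2 : g (j+1) x = derivWithin (g j) s x := congrFun iteratedDerivWithin_succ x
    rw [h2]; exact h1
  have hoo : Set.Ioo (0:ℝ) 1 ⊆ s := Set.Ioo_subset_Ioc_self
  have hderiv : ∀ j ≤ k, ∀ x ∈ Set.Ioo (0:ℝ) 1, HasDerivAt (g j) (g (j+1) x) x := by
    intro j hj x hx
    exact (hder j hj x (hoo hx)).hasDerivAt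
      (Filter.mem_of_superset (isOpen_Ioo.mem_nhds hx) hoo)
  -- Lipschitz estimates for j < k
  have hlip : ∀ j, j + 1 ≤ k → ∀ a ∈ s, ∀ b ∈ s, |g j b - g j a| ≤ C * |b - a| := by
    intro j hj a ha b hb
    have := (convex_Ioc (0:ℝ) 1).norm_image_sub_le_of_norm_hasDerivWithin_le
      (f' := g (j+1)) (fun x hx => hder j (by omega) x hx)
      (fun x hx => by simpa [Real.norm_eq_abs] using hbound (j+1) hj x hx) ha hb
    simpa [Real.norm_eq_abs] using this
  -- Hölder estimate for g k (signed version on ordered pairs)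
  have hhold : ∀ a ∈ s, ∀ b ∈ s, a ≤ b → |g k b - g k a| ≤ (C/γ) * (b ^ γ - a ^ γ) := by
    intro a ha b hb hab
    have hIoo : Set.Ioo a b ⊆ Set.Ioo (0:ℝ) 1 := fun x hx =>
      ⟨lt_trans ha.1 hx.1, lt_of_lt_of_le hx.2 hb.2⟩
    have hmono : ∀ σ : ℝ, |σ| = 1 →
        MonotoneOn (fun x => (C/γ) * x ^ γ + σ * g k x) (Set.Icc a b) := by
      intro σ hσ
      have hds : ∀ x ∈ Set.Ioo a b, HasDerivAt (fun x => (C/γ) * x ^ γ + σ * g k x)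
          (C * x ^ (γ - 1) + σ * g (k+1) x) x := by
        intro x hx
        have hx0 : (0:ℝ) < x := lt_trans ha.1 hx.1
        have h1 : HasDerivAt (fun x : ℝ => (C/γ) * x ^ γ) ((C/γ) * (γ * x ^ (γ-1))) x :=
          (Real.hasDerivAt_rpow_const (Or.inl hx0.ne')).const_mul (C/γ)
        have h2 : HasDerivAt (fun x => σ * g k x) (σ * g (k+1) x) x :=
          (hderiv k le_rfl x (hIoo hx)).const_mul σ
        have : (C/γ) * (γ * x ^ (γ-1)) = C * x ^ (γ-1) := by
          field_simp
        exact this ▸ h1.add h2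
      apply monotoneOn_of_deriv_nonneg (convex_Icc a b)
      · apply ContinuousOn.add
        · intro x hx
          exact (continuousAt_const.mul
            (Real.continuousAt_rpow_const x γ (Or.inl (lt_of_lt_of_le ha.1 hx.1).ne'))).continuousWithinAt
        · exact continuousOn_const.mul (((hdiff k le_rfl).continuousOn).mono
            (fun x hx => ⟨lt_of_lt_of_le ha.1 hx.1, le_trans hx.2 hb.2⟩))
      · rw [interior_Icc]
        intro x hx
        exact ((hds x hx).differentiableAt).differentiableWithinAt
      · rw [interior_Icc]
        intro x hx
        rw [(hds x hx).deriv]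
        have hx01 := hIoo hx
        have hb' := hbound' x ⟨hx01.1, hx01.2.le⟩
        have h1 : |σ * g (k+1) x| ≤ C * x ^ (γ-1) := by
          rw [abs_mul, hσ, one_mul]; exact hb'
        linarith [abs_le.1 h1]
    have hmem_a : a ∈ Set.Icc a b := Set.left_mem_Icc.2 hab
    have hmem_b : b ∈ Set.Icc a b := Set.right_mem_Icc.2 hab
    have h1 := hmono 1 (by norm_num) hmem_a hmem_b hab
    have h2 := hmono (-1) (by norm_num) hmem_a hmem_b hab
    simp only [one_mul, neg_one_mul] at h1 h2
    have hexp : (C/γ) * (b ^ γ - a ^ γ) = (C/γ) * b ^ γ - (C/γ) * a ^ γ := by ring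
    rw [abs_le]; constructor <;> [skip; skip] <;> rw [hexp] at * <;> linarith
  -- full Hölder estimate on s
  have hS : ∀ a ∈ s, ∀ b ∈ s, |g k a - g k b| ≤ (C/γ) * |a - b| ^ γ := by
    have key : ∀ a ∈ s, ∀ b ∈ s, a ≤ b → |g k a - g k b| ≤ (C/γ) * |a - b| ^ γ := by
      intro a ha b hb hab
      have h := hhold a ha b hb hab
      have h2 := rpow_sub_le_aux γ hγ0 hγ1.le ha.1.le hab
      have habs : |a - b| = b - a := by
        rw [abs_sub_comm]; exact abs_of_nonneg (by linarith)
      rw [abs_sub_comm, habs]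
      calc |g k b - g k a| ≤ (C/γ) * (b ^ γ - a ^ γ) := h
        _ ≤ (C/γ) * (b - a) ^ γ := mul_le_mul_of_nonneg_left h2 hCγ
    intro a ha b hb
    rcases le_total a b with hab | hab
    · exact key a ha b hb hab
    · rw [abs_sub_comm, abs_sub_comm a b]; exact key b hb a ha hab
  -- unified two-point estimate for all j ≤ k
  have hstep : ∀ j ≤ k, ∀ a ∈ s, ∀ b ∈ s, a ≤ b →
      |g j b - g j a| ≤ C * (b - a) + (C/γ) * (b ^ γ - a ^ γ) := by
    intro j hj a ha b hb hab
    have hrp : a ^ γ ≤ b ^ γ := Real.rpow_le_rpow ha.1.le hab hγ0.le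
    rcases eq_or_lt_of_le hj with h | h
    · subst h
      have := hhold a ha b hb hab
      nlinarith
    · have := hlip j (by omega) a ha b hb
      rw [abs_of_nonneg (by linarith : (0:ℝ) ≤ b - a)] at this
      nlinarith
  -- existence of limits at 0
  have hlim : ∀ j, ∃ L, j ≤ k → Tendsto (g j) (𝓝[>] (0:ℝ)) (𝓝 L) := by
    intro j
    by_cases hj : j ≤ k
    swap
    · exact ⟨0, fun h => absurd h hj⟩
    set u : ℝ → ℝ := fun x => g j x + (C * x + (C/γ) * x ^ γ) with hu
    have humono : MonotoneOn u (Set.Ioo (0:ℝ) 1) := by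
      intro a ha b hb hab
      have h := (abs_le.1 (hstep j hj a (hoo ha) b (hoo hb) hab)).1
      simp only [hu]
      nlinarith
    have hbdd : BddBelow (u '' Set.Ioo (0:ℝ) 1) := by
      refine ⟨-C, ?_⟩
      rintro y ⟨x, hx, rfl⟩
      have h1 := (abs_le.1 (hbound j hj x (hoo hx))).1
      have h2 : 0 ≤ C * x := mul_nonneg hC hx.1.le
      have h3 : 0 ≤ (C/γ) * x ^ γ := mul_nonneg hCγ (Real.rpow_nonneg hx.1.le γ)
      simp only [hu]
      linarith
    have t1 : Tendsto u (𝓝[>] (0:ℝ)) (𝓝 (sInf (u '' Set.Ioo 0 1))) :=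
      MonotoneOn.tendsto_nhdsWithin_Ioo_right ⟨1/2, by norm_num⟩ humono hbdd
    have t2 : Tendsto (fun x : ℝ => C * x + (C/γ) * x ^ γ) (𝓝[>] (0:ℝ)) (𝓝 0) := by
      have c1 : ContinuousAt (fun x : ℝ => C * x + (C/γ) * x ^ γ) 0 :=
        (continuousAt_const.mul continuousAt_id).add
          (continuousAt_const.mul (Real.continuousAt_rpow_const 0 γ (Or.inr hγ0.le)))
      have h2 := Tendsto.mono_left c1.tendsto
        (nhdsWithin_le_nhds : 𝓝[Set.Ioi (0:ℝ)] 0 ≤ 𝓝 0)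
      simpa [Real.zero_rpow hγ0.ne'] using h2
    refine ⟨sInf (u '' Set.Ioo 0 1) - 0, fun _ => ?_⟩
    have hgu : g j = fun x => u x - (C * x + (C/γ) * x ^ γ) := by
      funext x; simp only [hu]; ring
    rw [hgu]
    exact t1.sub t2
  choose L hL using hlim
  -- the extension
  set G : ℕ → ℝ → ℝ := fun j x => if x ≤ 0 then L j else g j x with hG_def
  have hGs : ∀ j, ∀ x : ℝ, 0 < x → G j x = g j x := fun j x hx => if_neg (not_le.2 hx)
  have hG0 : ∀ j, G j 0 = L j := fun j => if_pos le_rfl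
  have hGtend : ∀ j ≤ k, Tendsto (G j) (𝓝[>] (0:ℝ)) (𝓝 (L j)) := by
    intro j hj
    apply (hL j hj).congr'
    filter_upwards [self_mem_nhdsWithin] with y hy
    exact (hGs j y hy).symm
  have hst : ∀ x ∈ s, s ∈ 𝓝[t] x := by
    intro x hx
    have hseq : Set.Ioi (0:ℝ) ∩ t = s := by
      ext y
      constructor
      · rintro ⟨h1, _, h3⟩; exact ⟨h1, h3⟩
      · rintro ⟨h1, h2⟩; exact ⟨h1, h1.le, h2⟩
    rw [← hseq]
    exact Filter.inter_mem (mem_nhdsWithin_of_mem_nhds (isOpen_Ioi.mem_nhds hx.1))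
      self_mem_nhdsWithin
  -- continuity of G j on t
  have hGcont : ∀ j ≤ k, ContinuousOn (G j) t := by
    intro j hj x hx
    rcases eq_or_lt_of_le hx.1 with h0 | h0
    · subst h0
      have h := (hGtend j hj).mono_left (nhdsWithin_mono 0 (fun y (hy : y ∈ s) => hy.1))
      have hcw : ContinuousWithinAt (G j) s 0 := by
        show Tendsto (G j) (𝓝[s] 0) (𝓝 (G j 0))
        rw [hG0 j]; exact h
      rw [← continuousWithinAt_diff_self]
      have hts : t \ {0} = s := Set.Icc_diff_left
      rw [hts]
      exact hcw
    · have hxs : x ∈ s := ⟨h0, hx.2⟩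
      have hc : ContinuousWithinAt (g j) s x := (hdiff j hj).continuousOn x hxs
      have hct : ContinuousWithinAt (g j) t x := hc.mono_of_mem_nhdsWithin (hst x hxs)
      apply hct.congr_of_eventuallyEq
      · filter_upwards [mem_nhdsWithin_of_mem_nhds (isOpen_Ioi.mem_nhds h0)] with y hy
        exact if_neg (not_le.2 hy)
      · exact hGs j x h0
  -- derivatives of G at interior points
  have hGderiv : ∀ j ≤ k, ∀ x ∈ Set.Ioo (0:ℝ) 1, HasDerivAt (G j) (g (j+1) x) x := by
    intro j hj x hx
    apply (hderiv j hj x hx).congr_of_eventuallyEq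
    filter_upwards [isOpen_Ioi.mem_nhds hx.1] with y hy
    exact if_neg (not_le.2 hy)
  -- derivatives of G within t
  have hGder : ∀ j, j + 1 ≤ k → ∀ x ∈ t, HasDerivWithinAt (G j) (G (j+1) x) t x := by
    intro j hj x hx
    rcases eq_or_lt_of_le hx.1 with h0 | h0
    · subst h0
      have hdi : DifferentiableOn ℝ (G j) (Set.Ioo 0 1) := fun y hy =>
        ((hGderiv j (by omega) y hy).differentiableAt).differentiableWithinAt
      have hco : ContinuousWithinAt (G j) (Set.Ioo 0 1) 0 := by
        show Tendsto (G j) (𝓝[Set.Ioo (0:ℝ) 1] 0) (𝓝 (G j 0))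
        rw [hG0 j]
        exact (hGtend j (by omega)).mono_left
          (nhdsWithin_mono 0 (fun y (hy : y ∈ Set.Ioo (0:ℝ) 1) => hy.1))
      have hmem : Set.Ioo (0:ℝ) 1 ∈ 𝓝[>] (0:ℝ) :=
        Ioo_mem_nhdsGT_of_mem ⟨le_rfl, zero_lt_one⟩
      have hd' : Tendsto (fun y => deriv (G j) y) (𝓝[>] (0:ℝ)) (𝓝 (L (j+1))) := by
        apply (hL (j+1) hj).congr'
        filter_upwards [hmem] with y hy
        exact ((hGderiv j (by omega) y hy).deriv).symm
      have h1 := hasDerivWithinAt_Ici_of_tendsto_deriv hdi hco hmem hd'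
      have h2 : HasDerivWithinAt (G j) (L (j+1)) t 0 :=
        h1.mono (fun y (hy : y ∈ t) => hy.1)
      rw [show G (j+1) 0 = L (j+1) from hG0 _]
      exact h2
    · have hxs : x ∈ s := ⟨h0, hx.2⟩
      have h1 : HasDerivWithinAt (g j) (g (j+1) x) t x :=
        (hder j (by omega) x hxs).mono_of_mem_nhdsWithin (hst x hxs)
      have h2 : HasDerivWithinAt (G j) (g (j+1) x) t x := by
        apply h1.congr_of_eventuallyEq
        · filter_upwards [mem_nhdsWithin_of_mem_nhds (isOpen_Ioi.mem_nhds h0)] with y hy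
          exact if_neg (not_le.2 hy)
        · exact hGs j x h0
      rw [hGs (j+1) x h0]
      exact h2
  -- identification of iterated derivatives
  have hiter : ∀ j ≤ k, ∀ x ∈ t, iteratedDerivWithin j (G 0) t x = G j x := by
    intro j
    induction j with
    | zero => intro _ x hx; simp [iteratedDerivWithin_zero]
    | succ n ih =>
      intro hn x hx
      rw [iteratedDerivWithin_succ]
      have heq : Set.EqOn (iteratedDerivWithin n (G 0) t) (G n) t :=
        fun y hy => ih (by omega) y hy
      rw [derivWithin_congr heq (heq hx)]
      exact (hGder n (by omega) x hx).derivWithin (htuniq x hx)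
  -- smoothness
  have hcd : ∀ m : ℕ, ∀ j : ℕ, j + m = k → ContDiffOn ℝ (m : WithTop ℕ∞) (G j) t := by
    intro m
    induction m with
    | zero =>
      intro j hj
      exact contDiffOn_zero.mpr (hGcont j (by omega))
    | succ n ih =>
      intro j hj
      have hcast : ((n + 1 : ℕ) : WithTop ℕ∞) = (n : WithTop ℕ∞) + 1 := by push_cast; rfl
      rw [hcast, contDiffOn_succ_iff_derivWithin htuniq]
      refine ⟨fun x hx => (hGder j (by omega) x hx).differentiableWithinAt, ?_, ?_⟩
      · intro h; simp at h
      · apply (ih (j+1) (by omega)).congr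
        intro x hx
        exact (hGder j (by omega) x hx).derivWithin (htuniq x hx)
  -- Hölder estimate involving the boundary point
  have hZ : ∀ b ∈ s, |L k - g k b| ≤ (C/γ) * |0 - b| ^ γ := by
    intro b hb
    have t1 : Tendsto (fun x => |g k x - g k b|) (𝓝[>] (0:ℝ)) (𝓝 |L k - g k b|) :=
      ((hL k le_rfl).sub tendsto_const_nhds).abs
    have t2 : Tendsto (fun x : ℝ => (C/γ) * |x - b| ^ γ) (𝓝[>] (0:ℝ))
        (𝓝 ((C/γ) * |0 - b| ^ γ)) := by
      have habs : ContinuousAt (fun x : ℝ => |x - b|) 0 :=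
        (continuous_abs.comp (continuous_id.sub continuous_const)).continuousAt
      have hne : |(0:ℝ) - b| ≠ 0 := by
        simp only [zero_sub, abs_neg]
        exact (abs_pos.2 hb.1.ne').ne'
      have c1 : ContinuousAt (fun x : ℝ => (C/γ) * |x - b| ^ γ) 0 :=
        continuousAt_const.mul (habs.rpow_const (Or.inl hne))
      exact Tendsto.mono_left c1.tendsto
        (nhdsWithin_le_nhds : 𝓝[Set.Ioi (0:ℝ)] 0 ≤ 𝓝 0)
    apply le_of_tendsto_of_tendsto t1 t2
    filter_upwards [Ioc_mem_nhdsGT_of_mem (Set.mem_Ico.2 ⟨le_rfl, zero_lt_one⟩)] with x hx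
    exact hS x hx b hb
  have hholdt : ∀ ρ₁ ∈ t, ∀ ρ₂ ∈ t, |G k ρ₁ - G k ρ₂| ≤ (C/γ) * |ρ₁ - ρ₂| ^ γ := by
    intro ρ₁ h1 ρ₂ h2
    rcases eq_or_lt_of_le h1.1 with e1 | e1 <;> rcases eq_or_lt_of_le h2.1 with e2 | e2
    · rw [← e1, ← e2]
      simp only [sub_self, abs_zero]
      exact mul_nonneg hCγ (Real.rpow_nonneg le_rfl γ)
    · rw [← e1, hG0, hGs k ρ₂ e2]
      exact hZ ρ₂ ⟨e2, h2.2⟩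
    · rw [← e2, hG0, hGs k ρ₁ e1, abs_sub_comm, abs_sub_comm ρ₁ 0]
      exact hZ ρ₁ ⟨e1, h1.2⟩
    · rw [hGs k ρ₁ e1, hGs k ρ₂ e2]
      exact hS ρ₁ ⟨e1, h1.2⟩ ρ₂ ⟨e2, h2.2⟩
  refine ⟨G 0, ?_, ?_, ?_⟩
  · intro ρ hρ
    rw [hGs 0 ρ hρ.1]
    simp only [hg_def]
    rw [iteratedDerivWithin_zero]
  · exact_mod_cast hcd k 0 (by omega)
  · intro ρ₁ h1 ρ₂ h2
    rw [hiter k le_rfl ρ₁ h1, hiter k le_rfl ρ₂ h2]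
    exact hholdt ρ₁ h1 ρ₂ h2
end
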